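/- For all complex q with |q| < 1, (q;q)_∞ = 1 + ∑_{m=1}^{∞} (-1)^m [ (q^{m+1};q)_m q^{m(5m+1)/2} + (q^m;q)_m q^{m(5m-1)/2} + (q^m;q)_{m-1} q^{m(5m-3)/2} ]. -/

import Mathlib

open Finset Filter Topology
namespace Hepta


noncomputable def w (q : ℂ) (j n : ℕ) : ℂ := ∏ i ∈ Finset.range n, (1 - q ^ (j + 1) * q ^ i)

def T : ℕ → ℕ
  | 0 => 0
  | j + 1 => T j + j

lemma twoT : ∀ j, 2 * T (j + 1) = (j + 1) * j
  | 0 => rfl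
  | j + 1 => by
    have h := twoT j
    show 2 * (T (j + 1) + (j + 1)) = (j + 2) * (j + 1)
    calc 2 * (T (j + 1) + (j + 1)) = 2 * T (j + 1) + 2 * (j + 1) := by ring
      _ = (j + 1) * j + 2 * (j + 1) := by rw [h]
      _ = (j + 2) * (j + 1) := by ring

lemma w_zero (q : ℂ) (j : ℕ) : w q j 0 = 1 := by simp [w]

lemma w_succ_right (q : ℂ) (j n : ℕ) : w q j (n + 1) = w q j n * (1 - q ^ (j + 1) * q ^ n) :=
  Finset.prod_range_succ _ _

lemma w_succ_left (q : ℂ) (j n : ℕ) : w q j (n + 1) = (1 - q ^ (j + 1)) * w q (j + 1) n := by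
  unfold w
  rw [Finset.prod_range_succ']
  rw [mul_comm]
  congr 1
  · simp
  · exact Finset.prod_congr rfl fun i _ => by ring_nf

noncomputable def v (q : ℂ) (M : ℕ) : ℕ → ℂ
  | 0 => 0
  | j + 1 => (-1 : ℂ) ^ (j + 1) *
      (q ^ ((2 * M + 1) * (j + 1) + T (j + 1)) * w q j (2 * M - j) +
       q ^ ((2 * M + 2) * (j + 1) + T (j + 1)) * w q j (2 * M + 1 - j))

lemma v_closed (q : ℂ) (M : ℕ) : ∀ j, j ≤ M → v q M j =
    (-1 : ℂ) ^ j * ((1 - q ^ j) *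
      ((q ^ ((2 * M + 1) * j + T j) + q ^ ((2 * M + 2) * j + T j) * (1 - q ^ (2 * M + 1))) *
        w q j (2 * M - j)))
  | 0, _ => by simp [v]
  | j + 1, hj => by
    show (-1 : ℂ) ^ (j + 1) *
      (q ^ ((2 * M + 1) * (j + 1) + T (j + 1)) * w q j (2 * M - j) +
       q ^ ((2 * M + 2) * (j + 1) + T (j + 1)) * w q j (2 * M + 1 - j)) = _
    have h1 : 2 * M - j = (2 * M - (j + 1)) + 1 := by omega
    have h2 : 2 * M + 1 - j = (2 * M - j) + 1 := by omega
    have e1 : w q j (2 * M - j) = (1 - q ^ (j + 1)) * w q (j + 1) (2 * M - (j + 1)) := by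
      rw [h1, w_succ_left]
    have e2 : w q j (2 * M + 1 - j) =
        (1 - q ^ (j + 1)) * (w q (j + 1) (2 * M - (j + 1)) * (1 - q ^ (2 * M + 1))) := by
      rw [h2, w_succ_left, h1, w_succ_right]
      have : q ^ (j + 1 + 1) * q ^ (2 * M - (j + 1)) = q ^ (2 * M + 1) := by
        rw [← pow_add]; congr 1; omega
      rw [this]
    rw [e1, e2]
    ring

lemma step (q : ℂ) (M : ℕ) (v : ℕ → ℂ)
    (hv : ∀ j, j ≤ M → v j =
      (-1 : ℂ) ^ j * ((1 - q ^ j) *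
        ((q ^ ((2 * M + 1) * j + T j) + q ^ ((2 * M + 2) * j + T j) * (1 - q ^ (2 * M + 1))) *
          w q j (2 * M - j))))
    (hv' : ∀ j, v (j + 1) = (-1 : ℂ) ^ (j + 1) *
      (q ^ ((2 * M + 1) * (j + 1) + T (j + 1)) * w q j (2 * M - j) +
       q ^ ((2 * M + 2) * (j + 1) + T (j + 1)) * w q j (2 * M + 1 - j))) :
    ∀ j, j ≤ M →
    (-1 : ℂ) ^ j * q ^ ((2 * M + 3) * j + T j) * w q j (2 * M + 2 - j)
      = (-1 : ℂ) ^ j * q ^ ((2 * M + 1) * j + T j) * w q j (2 * M - j) + (v (j + 1) - v j) := by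
  intro j hj
  have h1 : 2 * M + 2 - j = ((2 * M - j) + 1) + 1 := by omega
  have h2 : 2 * M + 1 - j = (2 * M - j) + 1 := by omega
  have hy1 : q ^ (j + 1) * q ^ (2 * M - j) = q ^ (2 * M + 1) := by
    rw [← pow_add]; congr 1; omega
  have hy2 : q ^ (j + 1) * q ^ ((2 * M - j) + 1) = q ^ (2 * M + 1) * q := by
    rw [← pow_add, ← pow_succ]; congr 1; omega
  have eW : w q j (2 * M + 2 - j) =
      w q j (2 * M - j) * (1 - q ^ (2 * M + 1)) * (1 - q ^ (2 * M + 1) * q) := by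
    rw [h1, w_succ_right, w_succ_right, hy1, hy2]
  have eW2 : w q j (2 * M + 1 - j) = w q j (2 * M - j) * (1 - q ^ (2 * M + 1)) := by
    rw [h2, w_succ_right, hy1]
  have hT : T (j + 1) = T j + j := rfl
  have e0 : q ^ ((2 * M + 3) * j + T j)
      = q ^ ((2 * M + 1) * j + T j) * (q ^ j * q ^ j) := by
    rw [show (2 * M + 3) * j + T j = (((2 * M + 1) * j + T j) + j) + j by ring, pow_add, pow_add,
      mul_assoc]
  have e1 : q ^ ((2 * M + 1) * (j + 1) + T (j + 1))
      = q ^ ((2 * M + 1) * j + T j) * (q ^ (2 * M + 1) * q ^ j) := by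
    rw [show (2 * M + 1) * (j + 1) + T (j + 1) = (((2 * M + 1) * j + T j) + (2 * M + 1)) + j by
      rw [hT]; ring, pow_add, pow_add, mul_assoc]
  have e2 : q ^ ((2 * M + 2) * (j + 1) + T (j + 1))
      = q ^ ((2 * M + 1) * j + T j) * (q ^ (2 * M + 1) * q * (q ^ j * q ^ j)) := by
    rw [show (2 * M + 2) * (j + 1) + T (j + 1)
        = (((((2 * M + 1) * j + T j) + (2 * M + 1)) + 1) + j) + j by rw [hT]; ring,
      pow_add, pow_add, pow_add, pow_add, pow_one]
    ring
  have e3 : q ^ ((2 * M + 2) * j + T j) = q ^ ((2 * M + 1) * j + T j) * q ^ j := by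
    rw [show (2 * M + 2) * j + T j = ((2 * M + 1) * j + T j) + j by ring, pow_add]
  rw [hv' j, hv j hj, eW, eW2, e0, e1, e2, e3, pow_succ]
  ring
lemma expA (M : ℕ) : (M + 1) * (5 * (M + 1) + 1) / 2 = (2 * M + 3) * (M + 1) + T (M + 1) := by
  have h := twoT M
  apply Nat.div_eq_of_eq_mul_left (by norm_num)
  calc (M + 1) * (5 * (M + 1) + 1) = (2 * M + 3) * (M + 1) * 2 + (M + 1) * M := by ring
    _ = (2 * M + 3) * (M + 1) * 2 + 2 * T (M + 1) := by rw [h]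
    _ = ((2 * M + 3) * (M + 1) + T (M + 1)) * 2 := by ring

lemma expB (M : ℕ) : (M + 1) * (5 * (M + 1) - 1) / 2 = (2 * M + 2) * (M + 1) + T (M + 1) := by
  have h := twoT M
  rw [show 5 * (M + 1) - 1 = 5 * M + 4 by omega]
  apply Nat.div_eq_of_eq_mul_left (by norm_num)
  calc (M + 1) * (5 * M + 4) = (2 * M + 2) * (M + 1) * 2 + (M + 1) * M := by ring
    _ = (2 * M + 2) * (M + 1) * 2 + 2 * T (M + 1) := by rw [h]
    _ = ((2 * M + 2) * (M + 1) + T (M + 1)) * 2 := by ring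

lemma expC (M : ℕ) : (M + 1) * (5 * (M + 1) - 3) / 2 = (2 * M + 1) * (M + 1) + T (M + 1) := by
  have h := twoT M
  rw [show 5 * (M + 1) - 3 = 5 * M + 2 by omega]
  apply Nat.div_eq_of_eq_mul_left (by norm_num)
  calc (M + 1) * (5 * M + 2) = (2 * M + 1) * (M + 1) * 2 + (M + 1) * M := by ring
    _ = (2 * M + 1) * (M + 1) * 2 + 2 * T (M + 1) := by rw [h]
    _ = ((2 * M + 1) * (M + 1) + T (M + 1)) * 2 := by ring


noncomputable def hepterm (q : ℂ) (m : ℕ) : ℂ :=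
  (-1 : ℂ) ^ (m + 1) *
    ((∏ i ∈ Finset.range (m + 1), (1 - q ^ (m + 2) * q ^ i)) *
        q ^ ((m + 1) * (5 * (m + 1) + 1) / 2) +
      (∏ i ∈ Finset.range (m + 1), (1 - q ^ (m + 1) * q ^ i)) *
        q ^ ((m + 1) * (5 * (m + 1) - 1) / 2) +
      (∏ i ∈ Finset.range m, (1 - q ^ (m + 1) * q ^ i)) *
        q ^ ((m + 1) * (5 * (m + 1) - 3) / 2))

noncomputable def R (q : ℂ) (M : ℕ) : ℂ :=
  ∑ j ∈ Finset.range (M + 1), (-1 : ℂ) ^ j * q ^ ((2 * M + 1) * j + T j) * w q j (2 * M - j)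

lemma hepterm_eq (q : ℂ) (m : ℕ) :
    hepterm q m = v q m (m + 1) +
      (-1 : ℂ) ^ (m + 1) * q ^ ((2 * m + 3) * (m + 1) + T (m + 1)) * w q (m + 1) (m + 1) := by
  show _ = (-1 : ℂ) ^ (m + 1) *
      (q ^ ((2 * m + 1) * (m + 1) + T (m + 1)) * w q m (2 * m - m) +
       q ^ ((2 * m + 2) * (m + 1) + T (m + 1)) * w q m (2 * m + 1 - m)) + _
  rw [show 2 * m - m = m by omega, show 2 * m + 1 - m = m + 1 by omega]
  unfold hepterm
  rw [expA, expB, expC]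
  show _ * ((w q (m + 1) (m + 1)) * _ + (w q m (m + 1)) * _ + (w q m m) * _) = _
  ring

lemma R_succ (q : ℂ) (M : ℕ) : R q (M + 1) = R q M + hepterm q M := by
  have h1 : R q (M + 1) = ∑ j ∈ Finset.range (M + 2),
      (-1 : ℂ) ^ j * q ^ ((2 * M + 3) * j + T j) * w q j (2 * M + 2 - j) := by
    unfold R
    simp only [show 2 * (M + 1) + 1 = 2 * M + 3 from by omega,
      show 2 * (M + 1) = 2 * M + 2 from by omega]
  have h2 : ∑ j ∈ Finset.range (M + 2),
      (-1 : ℂ) ^ j * q ^ ((2 * M + 3) * j + T j) * w q j (2 * M + 2 - j)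
      = (∑ j ∈ Finset.range (M + 1),
          (-1 : ℂ) ^ j * q ^ ((2 * M + 3) * j + T j) * w q j (2 * M + 2 - j))
        + (-1 : ℂ) ^ (M + 1) * q ^ ((2 * M + 3) * (M + 1) + T (M + 1)) *
            w q (M + 1) (2 * M + 2 - (M + 1)) := Finset.sum_range_succ _ _
  have h3 : 2 * M + 2 - (M + 1) = M + 1 := by omega
  have hsum : ∑ j ∈ Finset.range (M + 1),
      (-1 : ℂ) ^ j * q ^ ((2 * M + 3) * j + T j) * w q j (2 * M + 2 - j)
      = (∑ j ∈ Finset.range (M + 1),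
          (-1 : ℂ) ^ j * q ^ ((2 * M + 1) * j + T j) * w q j (2 * M - j))
        + ∑ j ∈ Finset.range (M + 1), (v q M (j + 1) - v q M j) := by
    rw [← Finset.sum_add_distrib]
    refine Finset.sum_congr rfl fun j hj => ?_
    exact step q M (v q M) (v_closed q M) (fun j => rfl) j
      (Nat.lt_succ_iff.mp (Finset.mem_range.mp hj))
  rw [h1, h2, h3, hsum, Finset.sum_range_sub (v q M)]
  have hv0 : v q M 0 = 0 := rfl
  rw [hv0, hepterm_eq]
  show R q M + _ + _ = _
  ring

lemma key (q : ℂ) : ∀ M : ℕ, 1 + ∑ m ∈ Finset.range M, hepterm q m = R q M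
  | 0 => by simp [R, w, T]
  | M + 1 => by
    rw [Finset.sum_range_succ, ← add_assoc, key q M, R_succ]
lemma norm_w_le (q : ℂ) (hq : ‖q‖ < 1) (j n : ℕ) :
    ‖w q j n‖ ≤ Real.exp ((1 - ‖q‖)⁻¹) := by
  have h0 : (0:ℝ) ≤ ‖q‖ := norm_nonneg q
  calc ‖w q j n‖ = ∏ i ∈ Finset.range n, ‖1 - q ^ (j+1) * q ^ i‖ := by
        rw [w]; exact norm_prod _ _
    _ ≤ ∏ i ∈ Finset.range n, Real.exp (‖q‖ ^ i) := by
        refine Finset.prod_le_prod (fun i _ => norm_nonneg _) (fun i _ => ?_)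
        have h1 : ‖1 - q ^ (j+1) * q ^ i‖ ≤ 1 + ‖q‖ ^ (j+1+i) := by
          calc ‖1 - q ^ (j+1) * q ^ i‖ ≤ ‖(1:ℂ)‖ + ‖q ^ (j+1) * q ^ i‖ := norm_sub_le _ _
            _ = 1 + ‖q‖ ^ (j+1+i) := by
                rw [norm_one, norm_mul, norm_pow, norm_pow, ← pow_add]
        refine h1.trans ?_
        have h2 : ‖q‖ ^ (j+1+i) ≤ ‖q‖ ^ i := pow_le_pow_of_le_one h0 hq.le (by omega)
        have h3 := Real.add_one_le_exp (‖q‖ ^ i)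
        linarith
    _ = Real.exp (∑ i ∈ Finset.range n, ‖q‖ ^ i) := (Real.exp_sum _ _).symm
    _ ≤ Real.exp ((1 - ‖q‖)⁻¹) := by
        refine Real.exp_le_exp.mpr ?_
        have h4 := Summable.sum_le_tsum (Finset.range n) (fun i _ => pow_nonneg h0 i)
          (summable_geometric_of_lt_one h0 hq)
        rwa [tsum_geometric_of_lt_one h0 hq] at h4

lemma mult (q : ℂ) (hq : ‖q‖ < 1) : Multipliable (fun i : ℕ => 1 - q ^ (i + 1)) := by
  have h0 : (0:ℝ) ≤ ‖q‖ := norm_nonneg q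
  have hlt : ∀ n : ℕ, ‖q ^ (n+1)‖ < 1 := fun n => by
    rw [norm_pow]
    calc ‖q‖ ^ (n+1) ≤ ‖q‖ ^ 1 := pow_le_pow_of_le_one h0 hq.le (by omega)
      _ = ‖q‖ := pow_one _
      _ < 1 := hq
  have hne : ∀ (x : Unit) (n : ℕ), (1 : ℂ) - q ^ (n+1) ≠ 0 := by
    intro _ n h
    have : (1:ℂ) = q ^ (n+1) := by linear_combination h
    have h2 := hlt n
    rw [← this] at h2
    simp at h2
  have hlog : Summable (fun n : ℕ => Complex.log (1 - q ^ (n+1))) := by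
    refine Summable.of_norm_bounded (g :=
      fun n => ((1 - ‖q‖)⁻¹ / 2 + 1) * ‖q‖ ^ n) ?_ ?_
    · refine Summable.mul_left _ (summable_geometric_of_lt_one h0 hq)
    · intro n
      have hz : ‖-(q ^ (n+1))‖ < 1 := by rw [norm_neg]; exact hlt n
      have h1 : (1:ℂ) - q ^ (n+1) = 1 + -(q ^ (n+1)) := by ring
      rw [h1]
      refine (Complex.norm_log_one_add_le hz).trans ?_
      set z : ℝ := ‖-(q ^ (n+1))‖ with hzdef
      have hz0 : 0 ≤ z := norm_nonneg _
      have hzq : z ≤ ‖q‖ := by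
        rw [hzdef, norm_neg, norm_pow]
        calc ‖q‖ ^ (n+1) ≤ ‖q‖ ^ 1 := pow_le_pow_of_le_one h0 hq.le (by omega)
          _ = ‖q‖ := pow_one _
      have hzn : z ≤ ‖q‖ ^ n := by
        rw [hzdef, norm_neg, norm_pow]
        exact pow_le_pow_of_le_one h0 hq.le (by omega)
      have hinv : (1 - z)⁻¹ ≤ (1 - ‖q‖)⁻¹ := by
        apply inv_anti₀ (by linarith) (by linarith)
      have hz2 : z ^ 2 ≤ z := by nlinarith
      have hq1 : 0 ≤ (1 - ‖q‖)⁻¹ := inv_nonneg.mpr (by linarith)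
      calc z ^ 2 * (1 - z)⁻¹ / 2 + z
          ≤ z * (1 - ‖q‖)⁻¹ / 2 + z := by
            have : z ^ 2 * (1 - z)⁻¹ ≤ z * (1 - ‖q‖)⁻¹ := by
              apply mul_le_mul hz2 hinv (inv_nonneg.mpr (by linarith)) hz0
            linarith
        _ ≤ ((1 - ‖q‖)⁻¹ / 2 + 1) * ‖q‖ ^ n := by
            have hpn : (0:ℝ) ≤ ‖q‖ ^ n := pow_nonneg h0 n
            have h5 : z * (1 - ‖q‖)⁻¹ ≤ ‖q‖ ^ n * (1 - ‖q‖)⁻¹ :=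
              mul_le_mul_of_nonneg_right hzn hq1
            nlinarith
  exact Complex.multipliable_of_summable_log hlog

lemma v_succ_norm (q : ℂ) (hq : ‖q‖ < 1) (m : ℕ) :
    ‖v q m (m + 1)‖ ≤ 2 * Real.exp ((1 - ‖q‖)⁻¹) * ‖q‖ ^ (m + 1) := by
  have h0 : (0:ℝ) ≤ ‖q‖ := norm_nonneg q
  have hK0 : (0:ℝ) ≤ Real.exp ((1 - ‖q‖)⁻¹) := (Real.exp_pos _).le
  have hv : v q m (m + 1) = (-1 : ℂ) ^ (m + 1) *
      (q ^ ((2 * m + 1) * (m + 1) + T (m + 1)) * w q m (2 * m - m) +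
       q ^ ((2 * m + 2) * (m + 1) + T (m + 1)) * w q m (2 * m + 1 - m)) := rfl
  rw [hv, norm_mul, norm_pow, norm_neg, norm_one, one_pow, one_mul]
  have he1 : m + 1 ≤ (2 * m + 1) * (m + 1) + T (m + 1) := by
    have h := Nat.le_mul_of_pos_left (m + 1) (show 0 < 2 * m + 1 by omega)
    omega
  have he2 : m + 1 ≤ (2 * m + 2) * (m + 1) + T (m + 1) := by
    have h := Nat.le_mul_of_pos_left (m + 1) (show 0 < 2 * m + 2 by omega)
    omega
  have b1 : ‖q ^ ((2 * m + 1) * (m + 1) + T (m + 1)) * w q m (2 * m - m)‖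
      ≤ ‖q‖ ^ (m + 1) * Real.exp ((1 - ‖q‖)⁻¹) := by
    rw [norm_mul, norm_pow]
    exact mul_le_mul (pow_le_pow_of_le_one h0 hq.le he1) (norm_w_le q hq _ _)
      (norm_nonneg _) (pow_nonneg h0 _)
  have b2 : ‖q ^ ((2 * m + 2) * (m + 1) + T (m + 1)) * w q m (2 * m + 1 - m)‖
      ≤ ‖q‖ ^ (m + 1) * Real.exp ((1 - ‖q‖)⁻¹) := by
    rw [norm_mul, norm_pow]
    exact mul_le_mul (pow_le_pow_of_le_one h0 hq.le he2) (norm_w_le q hq _ _)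
      (norm_nonneg _) (pow_nonneg h0 _)
  calc ‖_ + _‖ ≤ _ + _ := norm_add_le _ _
    _ ≤ ‖q‖ ^ (m + 1) * Real.exp ((1 - ‖q‖)⁻¹) + ‖q‖ ^ (m + 1) * Real.exp ((1 - ‖q‖)⁻¹) :=
        add_le_add b1 b2
    _ = 2 * Real.exp ((1 - ‖q‖)⁻¹) * ‖q‖ ^ (m + 1) := by ring

lemma hepterm_norm (q : ℂ) (hq : ‖q‖ < 1) (m : ℕ) :
    ‖hepterm q m‖ ≤ 3 * Real.exp ((1 - ‖q‖)⁻¹) * ‖q‖ ^ (m + 1) := by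
  have h0 : (0:ℝ) ≤ ‖q‖ := norm_nonneg q
  rw [hepterm_eq]
  have heA : m + 1 ≤ (2 * m + 3) * (m + 1) + T (m + 1) := by
    have h := Nat.le_mul_of_pos_left (m + 1) (show 0 < 2 * m + 3 by omega)
    omega
  have bA : ‖(-1 : ℂ) ^ (m + 1) * q ^ ((2 * m + 3) * (m + 1) + T (m + 1)) * w q (m+1) (m+1)‖
      ≤ ‖q‖ ^ (m + 1) * Real.exp ((1 - ‖q‖)⁻¹) := by
    rw [norm_mul, norm_mul, norm_pow, norm_pow, norm_neg, norm_one, one_pow, one_mul]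
    exact mul_le_mul (pow_le_pow_of_le_one h0 hq.le heA) (norm_w_le q hq _ _)
      (norm_nonneg _) (pow_nonneg h0 _)
  calc ‖_ + _‖ ≤ _ + _ := norm_add_le _ _
    _ ≤ 2 * Real.exp ((1 - ‖q‖)⁻¹) * ‖q‖ ^ (m + 1)
        + ‖q‖ ^ (m + 1) * Real.exp ((1 - ‖q‖)⁻¹) := add_le_add (v_succ_norm q hq m) bA
    _ = 3 * Real.exp ((1 - ‖q‖)⁻¹) * ‖q‖ ^ (m + 1) := by ring

lemma summable_hepterm (q : ℂ) (hq : ‖q‖ < 1) : Summable (hepterm q) := by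
  have h0 : (0:ℝ) ≤ ‖q‖ := norm_nonneg q
  refine Summable.of_norm_bounded
    (g := fun m => 3 * Real.exp ((1 - ‖q‖)⁻¹) * ‖q‖ ^ (m + 1)) ?_ (hepterm_norm q hq)
  have : Summable (fun m : ℕ => 3 * Real.exp ((1 - ‖q‖)⁻¹) * (‖q‖ ^ m * ‖q‖)) :=
    (((summable_geometric_of_lt_one h0 hq).mul_right _).mul_left _)
  exact this.congr fun m => by rw [← pow_succ]

lemma tendsto_R (q : ℂ) (hq : ‖q‖ < 1) :
    Tendsto (R q) atTop (𝓝 (∏' i : ℕ, (1 - q ^ (i + 1)))) := by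
  have h0 : (0:ℝ) ≤ ‖q‖ := norm_nonneg q
  have hK0 : (0:ℝ) ≤ Real.exp ((1 - ‖q‖)⁻¹) := (Real.exp_pos _).le
  set K : ℝ := Real.exp ((1 - ‖q‖)⁻¹) with hKdef
  have hsplit : ∀ M, R q M = (∑ j ∈ Finset.range M,
      (-1 : ℂ) ^ (j + 1) * q ^ ((2 * M + 1) * (j + 1) + T (j + 1)) * w q (j + 1) (2 * M - (j + 1)))
      + w q 0 (2 * M) := by
    intro M
    unfold R
    rw [Finset.sum_range_succ']
    congr 1
    show (-1 : ℂ) ^ 0 * q ^ ((2 * M + 1) * 0 + T 0) * w q 0 (2 * M - 0) = _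
    have hT0 : T 0 = 0 := rfl
    simp [hT0]
  -- tail bound
  have htail : ∀ M, ‖∑ j ∈ Finset.range M,
      (-1 : ℂ) ^ (j + 1) * q ^ ((2 * M + 1) * (j + 1) + T (j + 1)) * w q (j + 1) (2 * M - (j + 1))‖
      ≤ (K * (1 - ‖q‖)⁻¹) * (‖q‖ * (‖q‖ ^ 2) ^ M) := by
    intro M
    have step1 : ∀ j, ‖(-1 : ℂ) ^ (j + 1) * q ^ ((2 * M + 1) * (j + 1) + T (j + 1)) *
        w q (j + 1) (2 * M - (j + 1))‖ ≤ K * (‖q‖ ^ (2 * M + 1) * ‖q‖ ^ j) := by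
      intro j
      rw [norm_mul, norm_mul, norm_pow, norm_pow, norm_neg, norm_one, one_pow, one_mul]
      have he : 2 * M + 1 + j ≤ (2 * M + 1) * (j + 1) + T (j + 1) := by
        have h := Nat.le_mul_of_pos_left j (show 0 < 2 * M + 1 by omega)
        have h2 : (2 * M + 1) * (j + 1) = (2 * M + 1) * j + (2 * M + 1) := by ring
        omega
      calc ‖q‖ ^ ((2 * M + 1) * (j + 1) + T (j + 1)) * ‖w q (j + 1) (2 * M - (j + 1))‖
          ≤ ‖q‖ ^ (2 * M + 1 + j) * K :=
            mul_le_mul (pow_le_pow_of_le_one h0 hq.le he) (norm_w_le q hq _ _)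
              (norm_nonneg _) (pow_nonneg h0 _)
        _ = K * (‖q‖ ^ (2 * M + 1) * ‖q‖ ^ j) := by rw [pow_add]; ring
    calc ‖∑ j ∈ Finset.range M, _‖
        ≤ ∑ j ∈ Finset.range M, ‖(-1 : ℂ) ^ (j + 1) * q ^ ((2 * M + 1) * (j + 1) + T (j + 1)) *
            w q (j + 1) (2 * M - (j + 1))‖ := norm_sum_le _ _
      _ ≤ ∑ j ∈ Finset.range M, K * (‖q‖ ^ (2 * M + 1) * ‖q‖ ^ j) :=
          Finset.sum_le_sum fun j _ => step1 j
      _ = K * ‖q‖ ^ (2 * M + 1) * ∑ j ∈ Finset.range M, ‖q‖ ^ j := by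
          rw [Finset.mul_sum]; exact Finset.sum_congr rfl fun j _ => by ring
      _ ≤ K * ‖q‖ ^ (2 * M + 1) * (1 - ‖q‖)⁻¹ := by
          refine mul_le_mul_of_nonneg_left ?_ (by positivity)
          have h4 := Summable.sum_le_tsum (Finset.range M) (fun i _ => pow_nonneg h0 i)
            (summable_geometric_of_lt_one h0 hq)
          rwa [tsum_geometric_of_lt_one h0 hq] at h4
      _ = (K * (1 - ‖q‖)⁻¹) * (‖q‖ * (‖q‖ ^ 2) ^ M) := by
          rw [← pow_mul, show 2 * M + 1 = 2 * M + 1 from rfl]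
          rw [pow_add, pow_mul, pow_one]
          ring
  have hbound0 : Tendsto (fun M : ℕ => (K * (1 - ‖q‖)⁻¹) * (‖q‖ * (‖q‖ ^ 2) ^ M)) atTop (𝓝 0) := by
    have hr2 : ‖q‖ ^ 2 < 1 := by nlinarith
    have h2 : Tendsto (fun M : ℕ => (‖q‖ ^ 2) ^ M) atTop (𝓝 0) :=
      tendsto_pow_atTop_nhds_zero_of_lt_one (by positivity) hr2
    have h3 := (h2.const_mul ‖q‖).const_mul (K * (1 - ‖q‖)⁻¹)
    simpa using h3
  have htail0 : Tendsto (fun M => ∑ j ∈ Finset.range M,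
      (-1 : ℂ) ^ (j + 1) * q ^ ((2 * M + 1) * (j + 1) + T (j + 1)) * w q (j + 1) (2 * M - (j + 1)))
      atTop (𝓝 0) := squeeze_zero_norm htail hbound0
  have h2M : Tendsto (fun M : ℕ => 2 * M) atTop atTop :=
    tendsto_atTop_atTop.mpr fun b => ⟨b, fun a ha => by omega⟩
  have hwn : ∀ n, ∏ i ∈ Finset.range n, (1 - q ^ (i + 1)) = w q 0 n := fun n =>
    Finset.prod_congr rfl fun i _ => by rw [pow_one, ← pow_succ']
  have hprod := Multipliable.tendsto_prod_tprod_nat (mult q hq)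
  have hw0 : Tendsto (fun M : ℕ => w q 0 (2 * M)) atTop (𝓝 (∏' i : ℕ, (1 - q ^ (i + 1)))) := by
    have h5 := hprod.comp h2M
    refine h5.congr fun M => ?_
    exact hwn (2 * M)
  have := htail0.add hw0
  rw [zero_add] at this
  exact Tendsto.congr (fun M => (hsplit M).symm) this

end Hepta

/-- Heptagonal identity (Corollary 3.7, first form): for `|q| < 1`,
`(q;q)_∞ = 1 + ∑_{m=1}^∞ (-1)^m [ (q^{m+1};q)_m q^{m(5m+1)/2}
  + (q^m;q)_m q^{m(5m-1)/2} + (q^m;q)_{m-1} q^{m(5m-3)/2} ]`.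
(The series index is shifted: `m + 1` plays the role of `m ≥ 1`.) -/
theorem heptagonal_identity (q : ℂ) (hq : ‖q‖ < 1) :
    (∏' i : ℕ, (1 - q ^ (i + 1))) =
      1 + ∑' m : ℕ, (-1 : ℂ) ^ (m + 1) *
        ((∏ i ∈ Finset.range (m + 1), (1 - q ^ (m + 2) * q ^ i)) *
            q ^ ((m + 1) * (5 * (m + 1) + 1) / 2) +
          (∏ i ∈ Finset.range (m + 1), (1 - q ^ (m + 1) * q ^ i)) *
            q ^ ((m + 1) * (5 * (m + 1) - 1) / 2) +
          (∏ i ∈ Finset.range m, (1 - q ^ (m + 1) * q ^ i)) *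
            q ^ ((m + 1) * (5 * (m + 1) - 3) / 2)) := by
  have hq' : ‖q‖ < 1 := by exact hq
  show _ = 1 + ∑' m : ℕ, Hepta.hepterm q m
  have hsum := Hepta.summable_hepterm q hq'
  have h1 : Filter.Tendsto (fun M => 1 + ∑ m ∈ Finset.range M, Hepta.hepterm q m)
      Filter.atTop (nhds (1 + ∑' m : ℕ, Hepta.hepterm q m)) :=
    (hsum.hasSum.tendsto_sum_nat).const_add 1
  have h2 : Filter.Tendsto (fun M => 1 + ∑ m ∈ Finset.range M, Hepta.hepterm q m)
      Filter.atTop (nhds (∏' i : ℕ, (1 - q ^ (i + 1)))) :=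
    Filter.Tendsto.congr (fun M => (Hepta.key q M).symm) (Hepta.tendsto_R q hq')
  exact tendsto_nhds_unique h2 h1
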